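/- There exist five points v₀, …, v₄ of the Euclidean plane in general position (pairwise distinct, no three collinear) such that in the closed polygon with segments sᵢ = [vᵢ, v_{(i+1) mod 5}], every pair of non-adjacent segments (indices with j ≢ i, i±1 (mod 5)) has nonempty intersection; that is, the polygon attains all 5 = 5·(5−3)/2 possible crossings. -/

import Mathlib

noncomputable def pt (x y : ℝ) : EuclideanSpace ℝ (Fin 2) := WithLp.toLp 2 ![x, y]

noncomputable def V : Fin 5 → EuclideanSpace ℝ (Fin 2) :=
  ![pt 0 0, pt 7 4, pt (-1) 4, pt 6 0, pt 3 8]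

lemma pt_ne {x y x' y' : ℝ} (h : x ≠ x') : pt x y ≠ pt x' y' :=
  fun he => h (by simpa [pt] using congrArg (fun p : EuclideanSpace ℝ (Fin 2) => p 0) he)

lemma seg_mem (a b x : EuclideanSpace ℝ (Fin 2)) (t : ℝ) (h0 : 0 ≤ t) (h1 : t ≤ 1)
    (heq : (1-t) • a + t • b = x) : x ∈ segment ℝ a b :=
  ⟨1-t, t, by linarith, h0, by ring, heq⟩

lemma combo {x y x' y' t u v : ℝ} (hu : (1-t)*x+t*x' = u) (hv : (1-t)*y+t*y' = v) :
    (1-t) • pt x y + t • pt x' y' = pt u v := by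
  subst hu hv
  ext i
  fin_cases i <;> simp [pt]

lemma noncol (a b c : EuclideanSpace ℝ (Fin 2))
    (h : (b 0 - a 0) * (c 1 - a 1) - (b 1 - a 1) * (c 0 - a 0) ≠ 0) :
    ¬ Collinear ℝ ({a, b, c} : Set (EuclideanSpace ℝ (Fin 2))) := by
  intro hc
  rw [collinear_iff_of_mem (Set.mem_insert a _)] at hc
  obtain ⟨w, hw⟩ := hc
  obtain ⟨rb, hb⟩ := hw b (by simp)
  obtain ⟨rc, hcc⟩ := hw c (by simp)
  apply h
  have hb0 : b 0 = rb * w 0 + a 0 := by rw [hb]; rfl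
  have hb1 : b 1 = rb * w 1 + a 1 := by rw [hb]; rfl
  have hc0 : c 0 = rc * w 0 + a 0 := by rw [hcc]; rfl
  have hc1 : c 1 = rc * w 1 + a 1 := by rw [hcc]; rfl
  rw [hb0, hb1, hc0, hc1]; ring

/-- There exist five points in general position in the plane whose closed polygon attains
all `5·(5−3)/2 = 5` possible crossings: every pair of non-adjacent sides intersects. -/
theorem exists_pentagon_all_crossings :
    ∃ v : Fin 5 → EuclideanSpace ℝ (Fin 2),
      (∀ i j : Fin 5, i ≠ j → v i ≠ v j) ∧
      (∀ i j k : Fin 5, i ≠ j → j ≠ k → i ≠ k →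
        ¬ Collinear ℝ ({v i, v j, v k} : Set (EuclideanSpace ℝ (Fin 2)))) ∧
      (∀ i j : Fin 5, j ≠ i → j ≠ i + 1 → i ≠ j + 1 →
        (segment ℝ (v i) (v (i + 1)) ∩ segment ℝ (v j) (v (j + 1))).Nonempty) := by
  refine ⟨V, ?_, ?_, ?_⟩
  · intro i j hij
    fin_cases i <;> fin_cases j <;>
      first
        | exact absurd rfl hij
        | exact pt_ne (by norm_num)
  · intro i j k h1 h2 h3
    fin_cases i <;> fin_cases j <;> fin_cases k <;>
      first
        | exact absurd rfl h1
        | exact absurd rfl h2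
        | exact absurd rfl h3
        | exact noncol _ _ _ (by norm_num [V, pt])
  · intro i j h1 h2 h3
    fin_cases i <;> fin_cases j
    all_goals first
      | exact absurd rfl h1
      | exact absurd rfl h2
      | exact absurd rfl h3
      | skip
    -- remaining goals in order (i,j) = (0,2),(0,3),(1,3),(1,4),(2,0),(2,4),(3,0),(3,1),(4,1),(4,2)
    · exact ⟨pt 3 (12/7),
        seg_mem _ _ _ (3/7) (by norm_num) (by norm_num) (combo (by norm_num) (by norm_num)),
        seg_mem _ _ _ (4/7) (by norm_num) (by norm_num) (combo (by norm_num) (by norm_num))⟩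
    · exact ⟨pt (84/17) (48/17),
        seg_mem _ _ _ (12/17) (by norm_num) (by norm_num) (combo (by norm_num) (by norm_num)),
        seg_mem _ _ _ (6/17) (by norm_num) (by norm_num) (combo (by norm_num) (by norm_num))⟩
    · exact ⟨pt (9/2) 4,
        seg_mem _ _ _ (5/16) (by norm_num) (by norm_num) (combo (by norm_num) (by norm_num)),
        seg_mem _ _ _ (1/2) (by norm_num) (by norm_num) (combo (by norm_num) (by norm_num))⟩
    · exact ⟨pt (3/2) 4,
        seg_mem _ _ _ (11/16) (by norm_num) (by norm_num) (combo (by norm_num) (by norm_num)),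
        seg_mem _ _ _ (1/2) (by norm_num) (by norm_num) (combo (by norm_num) (by norm_num))⟩
    · exact ⟨pt 3 (12/7),
        seg_mem _ _ _ (4/7) (by norm_num) (by norm_num) (combo (by norm_num) (by norm_num)),
        seg_mem _ _ _ (3/7) (by norm_num) (by norm_num) (combo (by norm_num) (by norm_num))⟩
    · exact ⟨pt (18/17) (48/17),
        seg_mem _ _ _ (5/17) (by norm_num) (by norm_num) (combo (by norm_num) (by norm_num)),
        seg_mem _ _ _ (11/17) (by norm_num) (by norm_num) (combo (by norm_num) (by norm_num))⟩
    · exact ⟨pt (84/17) (48/17),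
        seg_mem _ _ _ (6/17) (by norm_num) (by norm_num) (combo (by norm_num) (by norm_num)),
        seg_mem _ _ _ (12/17) (by norm_num) (by norm_num) (combo (by norm_num) (by norm_num))⟩
    · exact ⟨pt (9/2) 4,
        seg_mem _ _ _ (1/2) (by norm_num) (by norm_num) (combo (by norm_num) (by norm_num)),
        seg_mem _ _ _ (5/16) (by norm_num) (by norm_num) (combo (by norm_num) (by norm_num))⟩
    · exact ⟨pt (3/2) 4,
        seg_mem _ _ _ (1/2) (by norm_num) (by norm_num) (combo (by norm_num) (by norm_num)),
        seg_mem _ _ _ (11/16) (by norm_num) (by norm_num) (combo (by norm_num) (by norm_num))⟩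
    · exact ⟨pt (18/17) (48/17),
        seg_mem _ _ _ (11/17) (by norm_num) (by norm_num) (combo (by norm_num) (by norm_num)),
        seg_mem _ _ _ (5/17) (by norm_num) (by norm_num) (combo (by norm_num) (by norm_num))⟩
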